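/- Let E be a real inner product space with inner product ⟪·,·⟫. Let b, k ∈ E, set B := ⟪b,b⟫ and f := ⟪b,k⟫, and assume B > 0. Let p, q, h be real numbers with p + q·B ≠ 0 and 4·p + 3·q·B ≠ 0. Suppose that for every y ∈ E one has B·(4·p + 3·q·B)·⟪k,y⟫² − 4·(4·p + 3·q·B)·⟪b,y⟫·⟪k,y⟫·f + 4·p·⟪y,y⟫·f² = h·(p·B·⟪y,y⟫ − (4·p + 3·q·B)·⟪b,y⟫²). Then for every y ∈ E one has f·(f·⟪b,y⟫ − B·⟪k,y⟫) = 0. -/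
import Mathlib


open RealInnerProductSpace

/-- equation (4.12): `f·(f·⟪b,y⟫ − B·⟪k,y⟫) = 0` for all `y`. -/
theorem conformal_factor_eq_4_12 {E : Type*} [NormedAddCommGroup E] [InnerProductSpace ℝ E]
    (b k : E) (B f : ℝ) (hBdef : B = ⟪b, b⟫) (hfdef : f = ⟪b, k⟫) (hB : 0 < B)
    (p q h : ℝ) (hpq : p + q * B ≠ 0) (hpq' : 4 * p + 3 * q * B ≠ 0)
    (hyp : ∀ y : E,
      B * (4 * p + 3 * q * B) * ⟪k, y⟫ ^ 2
        - 4 * (4 * p + 3 * q * B) * ⟪b, y⟫ * ⟪k, y⟫ * f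
        + 4 * p * ⟪y, y⟫ * f ^ 2
      = h * (p * B * ⟪y, y⟫ - (4 * p + 3 * q * B) * ⟪b, y⟫ ^ 2)) :
    ∀ y : E, f * (f * ⟪b, y⟫ - B * ⟪k, y⟫) = 0 := by
  intro y
  by_cases hf : f = 0
  · simp [hf]
  set v : E := f • b - B • k with hv
  have hbb : ⟪b, b⟫ = B := hBdef.symm
  have hbk : ⟪b, k⟫ = f := hfdef.symm
  have hkb : ⟪k, b⟫ = f := by rw [real_inner_comm]; exact hbk
  set K : ℝ := ⟪k, k⟫ with hK
  have hkv : ⟪k, v⟫ = f * f - B * K := by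
    rw [hv, inner_sub_right, real_inner_smul_right, real_inner_smul_right, hkb, hK]
  have hbv : ⟪b, v⟫ = 0 := by
    rw [hv, inner_sub_right, real_inner_smul_right, real_inner_smul_right, hbb, hbk]
    ring
  have hvb : ⟪v, b⟫ = 0 := by rw [real_inner_comm]; exact hbv
  have hvk : ⟪v, k⟫ = f * f - B * K := by rw [real_inner_comm]; exact hkv
  have hvv : ⟪v, v⟫ = B * (B * K - f * f) := by
    rw [hv, inner_sub_left, real_inner_smul_left, real_inner_smul_left, hbv, hkv]
    ring
  have h1 := hyp (b + v)
  have h2 := hyp (b - v)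
  simp only [inner_add_right, inner_sub_right, inner_add_left, inner_sub_left,
    hbb, hbv, hvb, hkb, hkv, hvk, hvv] at h1 h2
  have key : B * (4 * p + 3 * q * B) * f * (B * K - f * f) = 0 := by
    linear_combination h1 / 4 - h2 / 4
  have hne : B * (4 * p + 3 * q * B) * f ≠ 0 :=
    mul_ne_zero (mul_ne_zero hB.ne' hpq') hf
  have hD : B * K - f * f = 0 := (mul_eq_zero.mp key).resolve_left hne
  have hv0 : v = 0 := by
    rw [← @inner_self_eq_zero ℝ, hvv, hD, mul_zero]
  have : f * ⟪b, y⟫ - B * ⟪k, y⟫ = ⟪v, y⟫ := by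
    rw [hv, inner_sub_left, real_inner_smul_left, real_inner_smul_left]
  rw [this, hv0, inner_zero_left, mul_zero]
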